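/- Let n ≥ 2 and let A = 2^{1/n}·M, where M is the real n×n matrix with M_{ii} = 1 for 1 ≤ i ≤ n−1, M_{in} = 1/2 for 1 ≤ i ≤ n, and all other entries 0. Then for every nonzero integer vector v ∈ ℤⁿ whose last coordinate vₙ is even, one has ‖Av‖ ≥ 2^{1/n}, with equality for v = e₁. -/

import Mathlib

/-- The Euclidean norm of a vector in `ℝⁿ`. -/
noncomputable def eNorm {n : ℕ} (x : Fin n → ℝ) : ℝ :=
  Real.sqrt (∑ i, (x i) ^ 2)

/-- The Euclidean norm of `A v` for an integer vector `v`. -/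
noncomputable def latNorm {n : ℕ} (A : Matrix (Fin n) (Fin n) ℝ) (v : Fin n → ℤ) : ℝ :=
  eNorm (A.mulVec (fun i => (v i : ℝ)))

/-- The systole of `A`: the infimum (in fact minimum) of `‖A v‖` over nonzero
integer vectors `v ∈ ℤⁿ`. -/
noncomputable def syst {n : ℕ} (A : Matrix (Fin n) (Fin n) ℝ) : ℝ :=
  sInf {r | ∃ v : Fin n → ℤ, v ≠ 0 ∧ r = latNorm A v}

/-- The matrix `M` with `M i i = 1` for `i` in the upper-left `(n-1) × (n-1)` block,
last column constantly `1/2`, and all other entries `0`. -/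
noncomputable def Mmat (n : ℕ) : Matrix (Fin n) (Fin n) ℝ :=
  Matrix.of fun i j => if (j : ℕ) = n - 1 then 1 / 2 else if i = j then 1 else 0

/-- The matrix `A = 2^(1/n) • M` (which has determinant `1`). -/
noncomputable def Amat (n : ℕ) : Matrix (Fin n) (Fin n) ℝ :=
  ((2 : ℝ) ^ ((1 : ℝ) / n)) • Mmat n

lemma mulVec_Mmat {n : ℕ} (hn : 2 ≤ n) (w : Fin n → ℝ) (i : Fin n) :
    (Mmat n).mulVec w i
      = (if (i : ℕ) = n - 1 then 0 else w i) + w ⟨n - 1, Nat.sub_lt (by omega) one_pos⟩ / 2 := by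
  set last : Fin n := ⟨n - 1, by omega⟩ with hl
  have hcoe : ∀ j : Fin n, ((j : ℕ) = n - 1) ↔ j = last := by
    intro j; exact ⟨fun h => Fin.ext h, fun h => by rw [h]⟩
  simp only [Matrix.mulVec, dotProduct, Mmat, Matrix.of_apply]
  have hterm : ∀ j : Fin n,
      (if (j : ℕ) = n - 1 then (1:ℝ) / 2 else if i = j then 1 else 0) * w j
      = (if j = last then w j / 2 else if j = i then w j else 0) := by
    intro j
    by_cases hj : j = last
    · rw [if_pos ((hcoe j).mpr hj), if_pos hj]; ring
    · rw [if_neg (fun h => hj ((hcoe j).mp h)), if_neg hj]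
      by_cases hij : i = j
      · rw [if_pos hij, if_pos hij.symm]; ring
      · rw [if_neg hij, if_neg (fun h => hij h.symm)]; ring
  rw [Finset.sum_congr rfl (fun j _ => hterm j)]
  by_cases hi : i = last
  · rw [if_pos ((hcoe i).mpr hi)]
    have : ∀ j : Fin n, (if j = last then w j / 2 else if j = i then w j else 0)
        = (if j = last then w j / 2 else 0) := by
      intro j
      by_cases hj : j = last
      · simp [hj]
      · rw [if_neg hj, if_neg hj, if_neg (fun h => hj (h.trans hi))]
    rw [Finset.sum_congr rfl (fun j _ => this j), Finset.sum_ite_eq' Finset.univ last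
      (fun j => w j / 2)]
    simp
  · rw [if_neg (fun h => hi ((hcoe i).mp h))]
    have : ∀ j : Fin n, (if j = last then w j / 2 else if j = i then w j else 0)
        = (if j = last then w j / 2 else 0) + (if j = i then w j else 0) := by
      intro j
      by_cases hj : j = last
      · rw [if_pos hj, if_pos hj, if_neg (fun h => hi (hj ▸ h).symm)]; ring
      · rw [if_neg hj, if_neg hj]; ring
    rw [Finset.sum_congr rfl (fun j _ => this j), Finset.sum_add_distrib,
      Finset.sum_ite_eq' Finset.univ last (fun j => w j / 2),
      Finset.sum_ite_eq' Finset.univ i w]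
    simp [add_comm]

lemma latNorm_Amat {n : ℕ} (hn : 2 ≤ n) (v : Fin n → ℤ) :
    latNorm (Amat n) v = (2 : ℝ) ^ ((1 : ℝ) / n) *
      Real.sqrt (∑ i : Fin n, ((if (i : ℕ) = n - 1 then 0 else (v i : ℝ))
        + (v ⟨n - 1, Nat.sub_lt (by omega) one_pos⟩ : ℝ) / 2) ^ 2) := by
  have hc : (0:ℝ) < (2 : ℝ) ^ ((1 : ℝ) / n) := Real.rpow_pos_of_pos two_pos _
  unfold latNorm eNorm Amat
  rw [Matrix.smul_mulVec]
  have : ∀ i : Fin n, ((((2:ℝ) ^ ((1:ℝ)/n)) • (Mmat n).mulVec (fun i => (v i : ℝ))) i) ^ 2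
      = ((2:ℝ) ^ ((1:ℝ)/n)) ^ 2 *
        ((if (i : ℕ) = n - 1 then 0 else (v i : ℝ)) + (v ⟨n - 1, by omega⟩ : ℝ) / 2) ^ 2 := by
    intro i
    rw [Pi.smul_apply, smul_eq_mul, mulVec_Mmat hn, mul_pow]
  rw [Finset.sum_congr rfl (fun i _ => this i), ← Finset.mul_sum,
    Real.sqrt_mul (by positivity), Real.sqrt_sq hc.le]

/-- For `A = 2^(1/n) • M`, every nonzero integer vector whose last coordinate is even
satisfies `‖A v‖ ≥ 2^(1/n)`, with equality for `v = e₁`. -/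
theorem norm_ge_of_even_last {n : ℕ} (hn : 2 ≤ n) :
    (∀ v : Fin n → ℤ, v ≠ 0 → Even (v ⟨n - 1, by omega⟩) →
      (2 : ℝ) ^ ((1 : ℝ) / n) ≤ latNorm (Amat n) v) ∧
    latNorm (Amat n) (fun i => if (i : ℕ) = 0 then 1 else 0) = (2 : ℝ) ^ ((1 : ℝ) / n) := by
  have hc : (0:ℝ) < (2 : ℝ) ^ ((1 : ℝ) / n) := Real.rpow_pos_of_pos two_pos _
  constructor
  · intro v hv hev
    obtain ⟨k, hk⟩ := hev
    set u : Fin n → ℤ := fun i => if (i : ℕ) = n - 1 then k else v i + k with hu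
    rw [latNorm_Amat hn v]
    have hpt : ∀ i : Fin n,
        ((if (i : ℕ) = n - 1 then 0 else (v i : ℝ)) + (v ⟨n - 1, by omega⟩ : ℝ) / 2) ^ 2
        = ((u i : ℤ) : ℝ) ^ 2 := by
      intro i
      by_cases hi : (i : ℕ) = n - 1
      · rw [if_pos hi, hu]; simp only [if_pos hi, hk]; push_cast; ring
      · rw [if_neg hi, hu]; simp only [if_neg hi, hk]; push_cast; ring
    rw [Finset.sum_congr rfl (fun i _ => hpt i)]
    have hsum : (∑ i : Fin n, ((u i : ℤ) : ℝ) ^ 2) = ((∑ i : Fin n, u i ^ 2 : ℤ) : ℝ) := by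
      push_cast; ring
    rw [hsum]
    -- u is nonzero
    have hune : ∃ i, u i ≠ 0 := by
      by_contra h
      push_neg at h
      apply hv
      have hk0 : k = 0 := by
        have := h ⟨n - 1, by omega⟩
        simpa [hu] using this
      funext i
      by_cases hi : (i : ℕ) = n - 1
      · have : i = (⟨n - 1, by omega⟩ : Fin n) := Fin.ext hi
        rw [this]; simp [hk, hk0]
      · have := h i
        simp only [hu, if_neg hi, hk0, add_zero] at this
        simpa using this
    obtain ⟨i₀, hi₀⟩ := hune
    have h1 : (1 : ℤ) ≤ ∑ i : Fin n, u i ^ 2 := by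
      have hle : u i₀ ^ 2 ≤ ∑ i : Fin n, u i ^ 2 :=
        Finset.single_le_sum (fun i _ => sq_nonneg (u i)) (Finset.mem_univ i₀)
      have hpos : 0 < u i₀ ^ 2 := by positivity
      omega
    have h1' : (1 : ℝ) ≤ ((∑ i : Fin n, u i ^ 2 : ℤ) : ℝ) := by exact_mod_cast h1
    calc (2 : ℝ) ^ ((1 : ℝ) / n) = (2 : ℝ) ^ ((1 : ℝ) / n) * 1 := by ring
      _ ≤ _ := by
          apply mul_le_mul_of_nonneg_left _ hc.le
          rw [← Real.sqrt_one]
          exact Real.sqrt_le_sqrt h1'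
  · rw [latNorm_Amat hn]
    have hlast : ((⟨n - 1, by omega⟩ : Fin n) : ℕ) ≠ 0 := by simp; omega
    have hpt : ∀ i : Fin n,
        ((if (i : ℕ) = n - 1 then 0
            else (((if (i : ℕ) = 0 then 1 else 0 : ℤ)) : ℝ))
          + (((if ((⟨n - 1, by omega⟩ : Fin n) : ℕ) = 0 then 1 else 0 : ℤ)) : ℝ) / 2) ^ 2
        = (if i = (⟨0, by omega⟩ : Fin n) then 1 else 0) := by
      intro i
      rw [if_neg hlast]
      have hcoe : ((i : ℕ) = 0) ↔ i = (⟨0, by omega⟩ : Fin n) :=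
        ⟨fun h => Fin.ext h, fun h => by rw [h]⟩
      by_cases hi : (i : ℕ) = n - 1
      · have : ¬ (i : ℕ) = 0 := by omega
        rw [if_pos hi, if_neg (fun h => this ((hcoe).mpr h ▸ rfl))]
        · norm_num
      · rw [if_neg hi]
        by_cases h0 : (i : ℕ) = 0
        · rw [if_pos h0, if_pos (hcoe.mp h0)]; norm_num
        · rw [if_neg h0, if_neg (fun h => h0 (hcoe.mpr h))]; norm_num
    rw [Finset.sum_congr rfl (fun i _ => hpt i),
      Finset.sum_ite_eq' Finset.univ (⟨0, by omega⟩ : Fin n) (fun _ => (1:ℝ))]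
    simp
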